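/- (Two-structure non-ideal case, influence of a point in both structures) Let b^{k₁}, b^{k₂} ∈ {0,1}^n have supports S₁, S₂ with |S₁| = k₁, |S₂| = k₂, |S₁ ∩ S₂| = α₁ > p, and suppose max(k₁,k₂) < n. Define f(b) = 0 iff ‖b‖₁ ≤ p or b ≼ b^{k₁} or b ≼ b^{k₂}. Then for a coordinate i ∈ S₁ ∩ S₂, Inf_i^q[f] = (C(n-1,p) - C(k₁-1,p) - C(k₂-1,p) + C(α₁-1,p)) q^p (1-q)^{n-p-1}. -/

import Mathlib

open Finset

/-- Hamming weight of a Boolean vector. -/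
def wt {n : ℕ} (b : Fin n → Bool) : ℕ := (Finset.univ.filter fun i => b i = true).card

/-- Bernoulli(q) measure of a single vertex of the cube. -/
noncomputable def mu {n : ℕ} (q : ℝ) (b : Fin n → Bool) : ℝ :=
  q ^ wt b * (1 - q) ^ (n - wt b)

/-- Flip the `i`-th bit. -/
def bflip {n : ℕ} (i : Fin n) (b : Fin n → Bool) : Fin n → Bool :=
  Function.update b i (!(b i))

/-- Bernoulli(q) weighted influence of coordinate `i` on `f`. -/
noncomputable def Infl {n : ℕ} (q : ℝ) (f : (Fin n → Bool) → Bool) (i : Fin n) : ℝ :=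
  ∑ b : Fin n → Bool, if f b ≠ f (bflip i b) then mu q b else 0

/-- The monotone Boolean function of two (possibly overlapping) structures. -/
def fTwo {n : ℕ} (p : ℕ) (b1 b2 : Fin n → Bool) (b : Fin n → Bool) : Bool :=
  if wt b ≤ p ∨ (∀ i, b i ≤ b1 i) ∨ (∀ i, b i ≤ b2 i) then false else true

lemma bflip_bflip {n : ℕ} (i : Fin n) (b : Fin n → Bool) : bflip i (bflip i b) = b := by
  funext j
  by_cases hj : j = i <;> simp [bflip, Function.update_apply, hj]

lemma bflip_apply_self {n : ℕ} (i : Fin n) (b : Fin n → Bool) : bflip i b i = !(b i) := by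
  simp [bflip]

lemma bflip_apply_ne {n : ℕ} (i j : Fin n) (b : Fin n → Bool) (h : j ≠ i) :
    bflip i b j = b j := by
  simp [bflip, Function.update_apply, h]

lemma filter_bflip {n : ℕ} (i : Fin n) (b : Fin n → Bool) (h : b i = false) :
    (Finset.univ.filter fun j => bflip i b j = true)
      = insert i (Finset.univ.filter fun j => b j = true) := by
  ext j
  by_cases hj : j = i <;> simp [bflip, Function.update_apply, hj, h]

lemma wt_bflip {n : ℕ} (i : Fin n) (b : Fin n → Bool) (h : b i = false) :
    wt (bflip i b) = wt b + 1 := by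
  have : i ∉ Finset.univ.filter fun j => b j = true := by simp [h]
  rw [wt, filter_bflip i b h, Finset.card_insert_of_notMem this, wt]

lemma le_bflip_iff {n : ℕ} (i : Fin n) (b c : Fin n → Bool) (hb : b i = false)
    (hc : c i = true) : (∀ j, bflip i b j ≤ c j) ↔ (∀ j, b j ≤ c j) := by
  constructor
  · intro H j
    by_cases hj : j = i
    · subst hj; simp [hb]
    · have := H j; rwa [bflip_apply_ne i j b hj] at this
  · intro H j
    by_cases hj : j = i
    · subst hj; simp [bflip_apply_self, hb, hc]
    · rw [bflip_apply_ne i j b hj]; exact H j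

lemma piv_iff {n : ℕ} (p : ℕ) (b1 b2 b : Fin n → Bool) (i : Fin n)
    (h1 : b1 i = true) (h2 : b2 i = true) (hb : b i = false) :
    (fTwo p b1 b2 b ≠ fTwo p b1 b2 (bflip i b)) ↔
      (wt b = p ∧ ¬(∀ j, b j ≤ b1 j) ∧ ¬(∀ j, b j ≤ b2 j)) := by
  have hw : wt (bflip i b) = wt b + 1 := wt_bflip i b hb
  have hle1 := le_bflip_iff i b b1 hb h1
  have hle2 := le_bflip_iff i b b2 hb h2
  unfold fTwo
  split_ifs with hA hB hB
  · simp only [ne_eq, not_true_eq_false, false_iff]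
    rw [hw, hle1, hle2] at hB
    rintro ⟨hwp, hn1, hn2⟩
    rcases hB with h | h | h
    · omega
    · exact hn1 h
    · exact hn2 h
  · simp only [ne_eq, Bool.false_eq_true, not_false_eq_true, true_iff]
    rw [hw, hle1, hle2] at hB
    have hB1 : ¬(∀ j, b j ≤ b1 j) := fun h => hB (Or.inr (Or.inl h))
    have hB2 : ¬(∀ j, b j ≤ b2 j) := fun h => hB (Or.inr (Or.inr h))
    have hBw : ¬(wt b + 1 ≤ p) := fun h => hB (Or.inl h)
    refine ⟨?_, hB1, hB2⟩
    rcases hA with h | h | h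
    · omega
    · exact absurd h hB1
    · exact absurd h hB2
  · exfalso
    rw [hw, hle1, hle2] at hB
    rcases hB with h | h | h
    · exact hA (Or.inl (by omega))
    · exact hA (Or.inr (Or.inl h))
    · exact hA (Or.inr (Or.inr h))
  · simp only [ne_eq, not_true_eq_false, false_iff]
    rintro ⟨hwp, hn1, hn2⟩
    exact hA (Or.inl (by omega))

lemma sum_pair {n : ℕ} (i : Fin n) (g : (Fin n → Bool) → ℝ) :
    ∑ b : Fin n → Bool, g b
      = ∑ b ∈ Finset.univ.filter (fun b => b i = false), (g b + g (bflip i b)) := by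
  rw [Finset.sum_add_distrib]
  rw [← Finset.sum_filter_add_sum_filter_not Finset.univ (fun b => b i = false) g]
  congr 1
  apply Finset.sum_nbij' (fun b => bflip i b) (fun b => bflip i b)
  · intro b hb
    simp only [Finset.mem_filter, Finset.mem_univ, true_and] at hb ⊢
    simp [bflip_apply_self, hb]
  · intro b hb
    simp only [Finset.mem_filter, Finset.mem_univ, true_and] at hb ⊢
    simp [bflip_apply_self, hb]
  · intro b _; exact bflip_bflip i b
  · intro b _; exact bflip_bflip i b
  · intro b _; rw [bflip_bflip]

lemma le_iff_subset {n : ℕ} (b c : Fin n → Bool) :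
    (∀ j, b j ≤ c j) ↔
      (Finset.univ.filter fun j => b j = true) ⊆ (Finset.univ.filter fun j => c j = true) := by
  simp only [Finset.subset_iff, Finset.mem_filter, Finset.mem_univ, true_and]
  constructor
  · intro h j hj
    have := h j; rw [hj] at this; exact Bool.eq_true_of_true_le this
  · intro h j
    by_cases hj : b j = true
    · simp [hj, h hj]
    · simp [Bool.not_eq_true] at hj; simp [hj]

lemma powersetCard_inter {n : ℕ} (p : ℕ) (s t : Finset (Fin n)) :
    Finset.powersetCard p s ∩ Finset.powersetCard p t
      = Finset.powersetCard p (s ∩ t) := by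
  ext A
  simp only [Finset.mem_inter, Finset.mem_powersetCard, Finset.subset_inter_iff]
  tauto

lemma count_eq {n : ℕ} (p : ℕ) (b1 b2 : Fin n → Bool) (i : Fin n)
    (h1 : b1 i = true) (h2 : b2 i = true) :
    (Finset.univ.filter (fun b : Fin n → Bool =>
        b i = false ∧ wt b = p ∧ ¬(∀ j, b j ≤ b1 j) ∧ ¬(∀ j, b j ≤ b2 j))).card
    = ((Finset.univ.erase i).powersetCard p
        \ (((Finset.univ.filter fun j => b1 j = true).erase i).powersetCard p
          ∪ ((Finset.univ.filter fun j => b2 j = true).erase i).powersetCard p)).card := by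
  classical
  refine Finset.card_nbij' (fun b => Finset.univ.filter fun j => b j = true)
    (fun A => fun j => decide (j ∈ A)) ?hi ?hj ?li ?ri
  case hi =>
    intro b hb
    simp only [Finset.mem_coe, Finset.mem_filter, Finset.mem_univ, true_and] at hb
    obtain ⟨hbi, hbw, hn1, hn2⟩ := hb
    simp only [Finset.mem_coe, Finset.mem_sdiff, Finset.mem_union, Finset.mem_powersetCard]
    refine ⟨⟨?_, hbw⟩, ?_⟩
    · intro j hj
      simp only [Finset.mem_filter, Finset.mem_univ, true_and] at hj
      refine Finset.mem_erase.2 ⟨?_, Finset.mem_univ j⟩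
      rintro rfl; rw [hbi] at hj; exact Bool.false_ne_true hj
    · rintro (⟨hsub, -⟩ | ⟨hsub, -⟩)
      · exact hn1 ((le_iff_subset b b1).2 ((Finset.subset_erase.1 hsub).1))
      · exact hn2 ((le_iff_subset b b2).2 ((Finset.subset_erase.1 hsub).1))
  case hj =>
    intro A hA
    simp only [Finset.mem_coe, Finset.mem_sdiff, Finset.mem_union, Finset.mem_powersetCard, not_or] at hA
    obtain ⟨⟨hsub, hcard⟩, hn1, hn2⟩ := hA
    have hiA : i ∉ A := fun h => (Finset.mem_erase.1 (hsub h)).1 rfl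
    have hfilt : (Finset.univ.filter fun j => decide (j ∈ A) = true) = A := by
      ext j; simp
    simp only [Finset.mem_coe, Finset.mem_filter, Finset.mem_univ, true_and]
    refine ⟨by simp [hiA], ?_, ?_, ?_⟩
    · rw [wt, hfilt, hcard]
    · intro hle
      have hsA : A ⊆ Finset.univ.filter fun j => b1 j = true := by
        have := (le_iff_subset (fun j => decide (j ∈ A)) b1).1 hle
        rwa [hfilt] at this
      exact hn1 ⟨Finset.subset_erase.2 ⟨hsA, hiA⟩, hcard⟩
    · intro hle
      have hsA : A ⊆ Finset.univ.filter fun j => b2 j = true := by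
        have := (le_iff_subset (fun j => decide (j ∈ A)) b2).1 hle
        rwa [hfilt] at this
      exact hn2 ⟨Finset.subset_erase.2 ⟨hsA, hiA⟩, hcard⟩
  case li =>
    intro b _
    funext j
    simp
  case ri =>
    intro A _
    ext j; simp

theorem nonideal_two_both_influence {n p k₁ k₂ α₁ : ℕ}
    (hpa : p + 1 ≤ α₁) (ha₁ : α₁ < k₁) (ha₂ : α₁ < k₂) (hk₁ : k₁ < n) (hk₂ : k₂ < n)
    (q : ℝ) (hq : q ∈ Set.Ioo (0:ℝ) 1)
    (b1 b2 : Fin n → Bool) (hw1 : wt b1 = k₁) (hw2 : wt b2 = k₂)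
    (hover : (Finset.univ.filter fun i => b1 i = true ∧ b2 i = true).card = α₁)
    (i : Fin n) (hi1 : b1 i = true) (hi2 : b2 i = true) :
    Infl q (fTwo p b1 b2) i =
      (((n - 1).choose p : ℝ) - ((k₁ - 1).choose p : ℝ) - ((k₂ - 1).choose p : ℝ) +
          ((α₁ - 1).choose p : ℝ)) * q ^ p * (1 - q) ^ (n - p - 1) := by
  classical
  have hpn : p + 1 < n := by omega
  set Q : (Fin n → Bool) → Prop := fun b =>
    b i = false ∧ wt b = p ∧ ¬(∀ j, b j ≤ b1 j) ∧ ¬(∀ j, b j ≤ b2 j) with hQ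
  set c : ℝ := q ^ p * (1 - q) ^ (n - p - 1) with hc
  -- Step 1: the influence equals N * c
  have step1 : Infl q (fTwo p b1 b2) i = ((Finset.univ.filter Q).card : ℝ) * c := by
    rw [Infl, sum_pair i]
    have hterm : ∀ b ∈ Finset.univ.filter (fun b : Fin n → Bool => b i = false),
        ((if fTwo p b1 b2 b ≠ fTwo p b1 b2 (bflip i b) then mu q b else 0)
          + (if fTwo p b1 b2 (bflip i b) ≠ fTwo p b1 b2 (bflip i (bflip i b))
              then mu q (bflip i b) else 0))
        = if Q b then c else 0 := by
      intro b hb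
      simp only [Finset.mem_filter, Finset.mem_univ, true_and] at hb
      rw [bflip_bflip]
      have hpiv := piv_iff p b1 b2 b i hi1 hi2 hb
      by_cases hP : fTwo p b1 b2 b ≠ fTwo p b1 b2 (bflip i b)
      · obtain ⟨hwp, hn1, hn2⟩ := hpiv.1 hP
        rw [if_pos hP, if_pos (Ne.symm hP), if_pos ⟨hb, hwp, hn1, hn2⟩]
        have hwf : wt (bflip i b) = p + 1 := by rw [wt_bflip i b hb, hwp]
        have hnp : n - p = (n - p - 1) + 1 := by omega
        have hnp2 : n - (p + 1) = n - p - 1 := by omega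
        rw [mu, mu, hwp, hwf, hnp, hnp2, hc]
        ring
      · rw [if_neg hP, if_neg (fun h => hP (Ne.symm h)), if_neg ?_]
        · ring
        · intro hQb
          exact hP (hpiv.2 ⟨hQb.2.1, hQb.2.2⟩)
      -- note: hpiv RHS doesn't include b i = false
    rw [Finset.sum_congr rfl hterm]
    have hsplit : ∀ b : Fin n → Bool, Q b → b i = false := fun b hb => hb.1
    rw [Finset.sum_filter]
    have : ∀ b : Fin n → Bool,
        (if b i = false then (if Q b then c else 0) else 0) = if Q b then c else 0 := by
      intro b
      by_cases hb : b i = false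
      · rw [if_pos hb]
      · rw [if_neg hb, if_neg (fun h => hb (hsplit b h))]
    rw [Finset.sum_congr rfl (fun b _ => this b), ← Finset.sum_filter,
      Finset.sum_const, nsmul_eq_mul]
  rw [step1]
  -- Step 2: counting
  set T1 := Finset.univ.filter fun j => b1 j = true with hT1
  set T2 := Finset.univ.filter fun j => b2 j = true with hT2
  have hNcard : (Finset.univ.filter Q).card
      = ((Finset.univ.erase i).powersetCard p
          \ ((T1.erase i).powersetCard p ∪ (T2.erase i).powersetCard p)).card :=
    count_eq p b1 b2 i hi1 hi2
  have hiT1 : i ∈ T1 := by simp [hT1, hi1]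
  have hiT2 : i ∈ T2 := by simp [hT2, hi2]
  have hT1e : (T1.erase i).card = k₁ - 1 := by
    rw [Finset.card_erase_of_mem hiT1]; rw [hT1]; rw [← hw1]; rfl
  have hT2e : (T2.erase i).card = k₂ - 1 := by
    rw [Finset.card_erase_of_mem hiT2]; rw [hT2]; rw [← hw2]; rfl
  have hT12 : T1 ∩ T2 = Finset.univ.filter (fun j => b1 j = true ∧ b2 j = true) := by
    rw [hT1, hT2]; ext j; simp
  have hiT12 : i ∈ T1 ∩ T2 := Finset.mem_inter.2 ⟨hiT1, hiT2⟩
  have hT12e : ((T1 ∩ T2).erase i).card = α₁ - 1 := by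
    rw [Finset.card_erase_of_mem hiT12, hT12, hover]
  have hUe : ((Finset.univ : Finset (Fin n)).erase i).card = n - 1 := by
    rw [Finset.card_erase_of_mem (Finset.mem_univ i), Finset.card_univ, Fintype.card_fin]
  set Ω := (Finset.univ.erase i).powersetCard p with hΩ
  set Ω1 := (T1.erase i).powersetCard p with hΩ1
  set Ω2 := (T2.erase i).powersetCard p with hΩ2
  have hsub1 : Ω1 ⊆ Ω :=
    Finset.powersetCard_mono (Finset.erase_subset_erase i (Finset.subset_univ T1))
  have hsub2 : Ω2 ⊆ Ω :=
    Finset.powersetCard_mono (Finset.erase_subset_erase i (Finset.subset_univ T2))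
  have hunion : Ω1 ∪ Ω2 ⊆ Ω := Finset.union_subset hsub1 hsub2
  have e1 : (Ω \ (Ω1 ∪ Ω2)).card + (Ω1 ∪ Ω2).card = Ω.card :=
    Finset.card_sdiff_add_card_eq_card hunion
  have e2 : (Ω1 ∪ Ω2).card + (Ω1 ∩ Ω2).card = Ω1.card + Ω2.card :=
    Finset.card_union_add_card_inter Ω1 Ω2
  have hint : Ω1 ∩ Ω2 = ((T1 ∩ T2).erase i).powersetCard p := by
    rw [hΩ1, hΩ2, powersetCard_inter]
    congr 1
    ext j
    simp only [Finset.mem_inter, Finset.mem_erase]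
    tauto
  have cΩ : Ω.card = (n - 1).choose p := by
    rw [hΩ, Finset.card_powersetCard, hUe]
  have cΩ1 : Ω1.card = (k₁ - 1).choose p := by
    rw [hΩ1, Finset.card_powersetCard, hT1e]
  have cΩ2 : Ω2.card = (k₂ - 1).choose p := by
    rw [hΩ2, Finset.card_powersetCard, hT2e]
  have cΩ12 : (Ω1 ∩ Ω2).card = (α₁ - 1).choose p := by
    rw [hint, Finset.card_powersetCard, hT12e]
  have hkey : (Ω \ (Ω1 ∪ Ω2)).card + (k₁ - 1).choose p + (k₂ - 1).choose p
      = (n - 1).choose p + (α₁ - 1).choose p := by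
    omega
  rw [hNcard]
  have hcast : (((Ω \ (Ω1 ∪ Ω2)).card : ℝ))
      = ((n - 1).choose p : ℝ) - ((k₁ - 1).choose p : ℝ) - ((k₂ - 1).choose p : ℝ)
        + ((α₁ - 1).choose p : ℝ) := by
    have h := congrArg (Nat.cast : ℕ → ℝ) hkey
    push_cast at h
    linarith
  rw [hcast, hc]
  ring
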